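/- arXiv:2303.02853 — 5 statements merged into one kernel-verified Lean document; each statement's English description precedes it below -/
import Mathlib

section
/- (Rule of Column Sums) Let A and B be the z-matrix and w-matrix of a singular sequence, and let E = (e_{ij}) be either A or B. Then for every j ∈ {1,…,n} the column sum Σ_{i=1}^n e_{ij} is not equal to 1, and the column sums of E are not all equal to 0 (equivalently, E is not the zero matrix). -/
open Filter Finset

/-- `Zq δ z k l` is the quantity `Z_{lk} = δ_{kl}^3 · (z_k − z_l)`
(and, applied to `w`, the quantity `W_{lk}`). -/
noncomputable def Zq {n : ℕ} (δ : Fin n → Fin n → ℂ) (z : Fin n → ℂ) (k l : Fin n) : ℂ :=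
  δ k l ^ 3 * (z k - z l)

/-- A singular sequence of normalized central configurations for the masses `m`:
sequences `z^{(N)}, w^{(N)} ∈ ℂ^n`, symmetric `δ^{(N)}`, and positive reals `ε_N → 0`
such that every term satisfies the central configuration equations
`z_k = ∑_{l≠k} m_l Z_{lk}`, `w_k = ∑_{l≠k} m_l W_{lk}`, the normalization
`δ_{kl}^2 z_{kl} w_{kl} = 1` (`k ≠ l`), the maximum of the `|z_k|, |Z_{kl}|`
(resp. `|w_k|, |W_{kl}|`) equals `ε_N^{-2}`, and all the sequences
`ε_N^2 z_k, ε_N^2 w_k, ε_N^2 Z_{kl}, ε_N^2 W_{kl}` converge. -/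
structure SingularSeq (n : ℕ) (m : Fin n → ℂ) : Type where
  z : ℕ → Fin n → ℂ
  w : ℕ → Fin n → ℂ
  delta : ℕ → Fin n → Fin n → ℂ
  eps : ℕ → ℝ
  eps_pos : ∀ N, 0 < eps N
  eps_lim : Tendsto eps atTop (nhds 0)
  delta_symm : ∀ N, ∀ k l : Fin n, delta N k l = delta N l k
  eq_z : ∀ N, ∀ k : Fin n, z N k = ∑ l ∈ univ.erase k, m l * Zq (delta N) (z N) k l
  eq_w : ∀ N, ∀ k : Fin n, w N k = ∑ l ∈ univ.erase k, m l * Zq (delta N) (w N) k l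
  normalize : ∀ N, ∀ k l : Fin n, k ≠ l →
    delta N k l ^ 2 * (z N l - z N k) * (w N l - w N k) = 1
  maxZ : ∀ N, IsGreatest
      ({x : ℝ | ∃ k, x = ‖z N k‖} ∪
        {x : ℝ | ∃ k l, k ≠ l ∧ x = ‖Zq (delta N) (z N) k l‖})
      (eps N ^ (-2 : ℤ))
  maxW : ∀ N, IsGreatest
      ({x : ℝ | ∃ k, x = ‖w N k‖} ∪
        {x : ℝ | ∃ k l, k ≠ l ∧ x = ‖Zq (delta N) (w N) k l‖})
      (eps N ^ (-2 : ℤ))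
  conv_z : ∀ k : Fin n, ∃ L : ℂ,
    Tendsto (fun N => (eps N : ℂ) ^ 2 * z N k) atTop (nhds L)
  conv_w : ∀ k : Fin n, ∃ L : ℂ,
    Tendsto (fun N => (eps N : ℂ) ^ 2 * w N k) atTop (nhds L)
  conv_Z : ∀ k l : Fin n, k ≠ l → ∃ L : ℂ,
    Tendsto (fun N => (eps N : ℂ) ^ 2 * Zq (delta N) (z N) k l) atTop (nhds L)
  conv_W : ∀ k l : Fin n, k ≠ l → ∃ L : ℂ,
    Tendsto (fun N => (eps N : ℂ) ^ 2 * Zq (delta N) (w N) k l) atTop (nhds L)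

/-- `A` and `B` are the z-matrix and the w-matrix of the singular sequence `S`:
symmetric `{0,1}`-matrices whose entries record which of the (convergent) sequences
`ε_N^2 z_i`, `ε_N^2 Z_{ij}` (resp. `ε_N^2 w_i`, `ε_N^2 W_{ij}`) have nonzero limit. -/
structure IsZWMatrices {n : ℕ} {m : Fin n → ℂ} (S : SingularSeq n m)
    (A B : Matrix (Fin n) (Fin n) ℕ) : Prop where
  zeroOne_A : ∀ i j, A i j = 0 ∨ A i j = 1
  symm_A : ∀ i j, A i j = A j i
  zeroOne_B : ∀ i j, B i j = 0 ∨ B i j = 1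
  symm_B : ∀ i j, B i j = B j i
  diag_A : ∀ i, A i i = 1 ↔
    ¬ Tendsto (fun N => (S.eps N : ℂ) ^ 2 * S.z N i) atTop (nhds 0)
  off_A : ∀ i j, i ≠ j → (A i j = 1 ↔
    ¬ Tendsto (fun N => (S.eps N : ℂ) ^ 2 * Zq (S.delta N) (S.z N) i j) atTop (nhds 0))
  diag_B : ∀ i, B i i = 1 ↔
    ¬ Tendsto (fun N => (S.eps N : ℂ) ^ 2 * S.w N i) atTop (nhds 0)
  off_B : ∀ i j, i ≠ j → (B i j = 1 ↔
    ¬ Tendsto (fun N => (S.eps N : ℂ) ^ 2 * Zq (S.delta N) (S.w N) i j) atTop (nhds 0))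

-- AUX START
private lemma freq_pigeonhole {T : Type*} [Finite T] {p : T → ℕ → Prop}
    (h : ∀ N, ∃ t, p t N) : ∃ t, ∃ᶠ N in atTop, p t N := by
  by_contra hc
  push_neg at hc
  have hc' : ∀ t, ∀ᶠ N in atTop, ¬ p t N := fun t => hc t
  have hall : ∀ᶠ N in atTop, ∀ t, ¬ p t N := eventually_all.mpr hc'
  obtain ⟨N, hN⟩ := hall.exists
  obtain ⟨t, ht⟩ := h N
  exact hN t ht

private lemma not_tendsto_of_freq_abs_one {f : ℕ → ℂ}
    (h : ∃ᶠ N in atTop, ‖f N‖ = 1) :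
    ¬ Tendsto f atTop (nhds 0) := by
  intro h0
  have habs : Tendsto (fun N => ‖f N‖) atTop (nhds 0) := by
    have := (continuous_norm.tendsto (0:ℂ)).comp h0
    simpa [Function.comp_def] using this
  have : (0 : ℝ) = 1 := tendsto_nhds_unique_of_frequently_eq habs tendsto_const_nhds h
  norm_num at this

private lemma abs_eps_sq_mul {eps : ℝ} (heps : 0 < eps) {x : ℂ}
    (hx : eps ^ (-2 : ℤ) = ‖x‖) :
    ‖(eps : ℂ) ^ 2 * x‖ = 1 := by
  rw [norm_mul, norm_pow, Complex.norm_real, Real.norm_of_nonneg heps.le, ← hx, zpow_neg]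
  have h2 : eps ^ (2 : ℤ) = eps ^ 2 := by
    rw [show ((2:ℤ)) = ((2:ℕ):ℤ) from rfl, zpow_natCast]
  rw [h2]
  exact mul_inv_cancel₀ (pow_ne_zero 2 heps.ne')

private lemma key {n : ℕ} (m : Fin n → ℂ) (hm1 : ∀ i, m i ≠ 0)
    (eps : ℕ → ℝ) (eps_pos : ∀ N, 0 < eps N)
    (delta : ℕ → Fin n → Fin n → ℂ)
    (z : ℕ → Fin n → ℂ)
    (eq_z : ∀ N, ∀ k : Fin n, z N k = ∑ l ∈ univ.erase k, m l * Zq (delta N) (z N) k l)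
    (maxZ : ∀ N, IsGreatest
      ({x : ℝ | ∃ k, x = ‖z N k‖} ∪
        {x : ℝ | ∃ k l, k ≠ l ∧ x = ‖Zq (delta N) (z N) k l‖})
      (eps N ^ (-2 : ℤ)))
    (conv_Z : ∀ k l : Fin n, k ≠ l → ∃ L : ℂ,
      Tendsto (fun N => (eps N : ℂ) ^ 2 * Zq (delta N) (z N) k l) atTop (nhds L))
    (A : Matrix (Fin n) (Fin n) ℕ)
    (zeroOne : ∀ i j, A i j = 0 ∨ A i j = 1)
    (symmA : ∀ i j, A i j = A j i)
    (diagA : ∀ i, A i i = 1 ↔ ¬ Tendsto (fun N => (eps N : ℂ) ^ 2 * z N i) atTop (nhds 0))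
    (offA : ∀ i j, i ≠ j → (A i j = 1 ↔
      ¬ Tendsto (fun N => (eps N : ℂ) ^ 2 * Zq (delta N) (z N) i j) atTop (nhds 0))) :
    (∀ j, (∑ i, A i j) ≠ 1) ∧ ¬ (∀ j, (∑ i, A i j) = 0) := by
  have off0 : ∀ i j, i ≠ j → A i j ≠ 1 →
      Tendsto (fun N => (eps N : ℂ) ^ 2 * Zq (delta N) (z N) i j) atTop (nhds 0) := by
    intro i j hij h1
    by_contra h
    exact h1 ((offA i j hij).mpr h)
  have hzsum : ∀ j N, (eps N : ℂ) ^ 2 * z N j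
      = ∑ l ∈ univ.erase j, m l * ((eps N : ℂ) ^ 2 * Zq (delta N) (z N) j l) := by
    intro j N
    rw [eq_z N j, Finset.mul_sum]
    exact Finset.sum_congr rfl fun l _ => by ring
  constructor
  · intro j hsum
    have hcard : ∑ i, A i j = (univ.filter (fun i => A i j = 1)).card := by
      rw [Finset.card_filter]
      exact Finset.sum_congr rfl fun i _ => by rcases zeroOne i j with h | h <;> simp [h]
    rw [hcard] at hsum
    obtain ⟨a, ha⟩ := Finset.card_eq_one.mp hsum
    have hmem : ∀ i, A i j = 1 ↔ i = a := by
      intro i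
      constructor
      · intro h
        have hi : i ∈ univ.filter (fun i => A i j = 1) := by simp [h]
        rwa [ha, Finset.mem_singleton] at hi
      · rintro rfl
        have hi : i ∈ univ.filter (fun i => A i j = 1) := by
          rw [ha]; exact Finset.mem_singleton_self i
        simpa using hi
    by_cases haj : a = j
    · subst haj
      have hdiag : A a a = 1 := (hmem a).mpr rfl
      have hsumt : Tendsto (fun N => ∑ l ∈ univ.erase a,
          m l * ((eps N : ℂ) ^ 2 * Zq (delta N) (z N) a l)) atTop (nhds 0) := by
        have h0 : (0 : ℂ) = ∑ _l ∈ univ.erase a, (0 : ℂ) := by simp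
        rw [h0]
        refine tendsto_finset_sum _ fun l hl => ?_
        have hla : l ≠ a := (Finset.mem_erase.mp hl).1
        have hAl : A a l ≠ 1 := by
          intro h
          exact hla ((hmem l).mp ((symmA l a).trans h))
        have := (off0 a l (Ne.symm hla) hAl).const_mul (m l)
        simpa using this
      have htend : Tendsto (fun N => (eps N : ℂ) ^ 2 * z N a) atTop (nhds 0) :=
        hsumt.congr fun N => (hzsum a N).symm
      exact (diagA a).mp hdiag htend
    · have hAaj : A a j = 1 := (hmem a).mpr rfl
      have hjj : A j j ≠ 1 := fun h => haj ((hmem j).mp h).symm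
      have hjj0 : Tendsto (fun N => (eps N : ℂ) ^ 2 * z N j) atTop (nhds 0) := by
        by_contra h
        exact hjj ((diagA j).mpr h)
      have hja : j ≠ a := fun h => haj h.symm
      obtain ⟨L, hL⟩ := conv_Z j a hja
      have hLne : L ≠ 0 := by
        rintro rfl
        exact (offA j a hja).mp ((symmA j a).trans hAaj) hL
      have hsumt : Tendsto (fun N => ∑ l ∈ univ.erase j,
          m l * ((eps N : ℂ) ^ 2 * Zq (delta N) (z N) j l)) atTop
          (nhds (∑ l ∈ univ.erase j, if l = a then m a * L else 0)) := by
        refine tendsto_finset_sum _ fun l hl => ?_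
        by_cases hla : l = a
        · subst hla
          simp only [if_pos rfl]
          exact hL.const_mul (m l)
        · simp only [if_neg hla]
          have hlj : l ≠ j := (Finset.mem_erase.mp hl).1
          have hAl : A j l ≠ 1 := by
            intro h
            exact hla ((hmem l).mp ((symmA l j).trans h))
          have := (off0 j l (Ne.symm hlj) hAl).const_mul (m l)
          simpa using this
      have hval : (∑ l ∈ univ.erase j, if l = a then m a * L else 0) = m a * L := by
        rw [Finset.sum_ite_eq' (univ.erase j) a (fun _ => m a * L)]
        simp [Finset.mem_erase, haj]
      rw [hval] at hsumt
      have htend : Tendsto (fun N => (eps N : ℂ) ^ 2 * z N j) atTop (nhds (m a * L)) :=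
        hsumt.congr fun N => (hzsum j N).symm
      have : m a * L = 0 := tendsto_nhds_unique htend hjj0
      exact mul_ne_zero (hm1 a) hLne this
  · intro hall
    have hex : ∀ N, ∃ t : Fin n ⊕ Fin n × Fin n,
        Sum.elim (fun k => eps N ^ (-2 : ℤ) = ‖z N k‖)
          (fun q : Fin n × Fin n => q.1 ≠ q.2 ∧
            eps N ^ (-2 : ℤ) = ‖Zq (delta N) (z N) q.1 q.2‖) t := by
      intro N
      rcases (maxZ N).1 with h | h
      · obtain ⟨k, hk⟩ := h
        exact ⟨Sum.inl k, hk⟩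
      · obtain ⟨k, l, hkl, hE⟩ := h
        exact ⟨Sum.inr (k, l), hkl, hE⟩
    obtain ⟨t, ht⟩ := freq_pigeonhole hex
    rcases t with k | q
    · simp only [Sum.elim_inl] at ht
      have hfreq : ∃ᶠ N in atTop, ‖(eps N : ℂ) ^ 2 * z N k‖ = 1 :=
        ht.mono fun N hN => abs_eps_sq_mul (eps_pos N) hN
      have h1 : A k k = 1 := (diagA k).mpr (not_tendsto_of_freq_abs_one hfreq)
      have h0 := (Finset.sum_eq_zero_iff.mp (hall k)) k (Finset.mem_univ k)
      rw [h1] at h0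
      exact one_ne_zero h0
    · simp only [Sum.elim_inr] at ht
      obtain ⟨N0, hne, -⟩ := ht.exists
      have hfreq : ∃ᶠ N in atTop,
          ‖(eps N : ℂ) ^ 2 * Zq (delta N) (z N) q.1 q.2‖ = 1 :=
        ht.mono fun N hN => abs_eps_sq_mul (eps_pos N) hN.2
      have h1 : A q.1 q.2 = 1 := (offA q.1 q.2 hne).mpr (not_tendsto_of_freq_abs_one hfreq)
      have h0 := (Finset.sum_eq_zero_iff.mp (hall q.2)) q.1 (Finset.mem_univ q.1)
      rw [h1] at h0
      exact one_ne_zero h0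
-- AUX END

theorem rule_of_column_sums (n : ℕ) (hn : 2 ≤ n) (m : Fin n → ℂ)
    (hm : ∀ I : Finset (Fin n), I.Nonempty → ∑ k ∈ I, m k ≠ 0)
    (S : SingularSeq n m) (A B : Matrix (Fin n) (Fin n) ℕ)
    (hAB : IsZWMatrices S A B) :
    ((∀ j, (∑ i, A i j) ≠ 1) ∧ ¬ (∀ j, (∑ i, A i j) = 0)) ∧
    ((∀ j, (∑ i, B i j) ≠ 1) ∧ ¬ (∀ j, (∑ i, B i j) = 0)) := by
  
  have hm1 : ∀ i, m i ≠ 0 := by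
    intro i
    have := hm {i} (Finset.singleton_nonempty i)
    simpa using this
  refine ⟨?_, ?_⟩
  · exact key m hm1 S.eps S.eps_pos S.delta S.z S.eq_z S.maxZ S.conv_Z A
      hAB.zeroOne_A hAB.symm_A hAB.diag_A hAB.off_A
  · exact key m hm1 S.eps S.eps_pos S.delta S.w S.eq_w S.maxW S.conv_W B
      hAB.zeroOne_B hAB.symm_B hAB.diag_B hAB.off_B
end

section
/- (Rule of Two Column Sums) Let A and B be the z-matrix and w-matrix of a singular sequence and C = A + B. If c_{ij} = 2 for some 1 ≤ i < j ≤ n, then ( Σ_{k≠i,j} (a_{ki} + a_{kj}) ) · ( Σ_{k≠i,j} (b_{ki} + b_{kj}) ) ≠ 0. -/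
open Filter Finset

/-- Swap the roles of `z` and `w` in a singular sequence. -/
noncomputable def SingularSeq.swap {n : ℕ} {m : Fin n → ℂ} (S : SingularSeq n m) :
    SingularSeq n m where
  z := S.w
  w := S.z
  delta := S.delta
  eps := S.eps
  eps_pos := S.eps_pos
  eps_lim := S.eps_lim
  delta_symm := S.delta_symm
  eq_z := S.eq_w
  eq_w := S.eq_z
  normalize := fun N k l h => by linear_combination S.normalize N k l h
  maxZ := S.maxW
  maxW := S.maxZ
  conv_z := S.conv_w
  conv_w := S.conv_z
  conv_Z := S.conv_W
  conv_W := S.conv_Z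

lemma IsZWMatrices.swap {n : ℕ} {m : Fin n → ℂ} {S : SingularSeq n m}
    {A B : Matrix (Fin n) (Fin n) ℕ} (h : IsZWMatrices S A B) :
    IsZWMatrices S.swap B A where
  zeroOne_A := h.zeroOne_B
  symm_A := h.symm_B
  zeroOne_B := h.zeroOne_A
  symm_B := h.symm_A
  diag_A := h.diag_B
  off_A := h.off_B
  diag_B := h.diag_A
  off_B := h.off_A

lemma Zq_anti {n : ℕ} (δ : Fin n → Fin n → ℂ) (hδ : ∀ k l, δ k l = δ l k)
    (z : Fin n → ℂ) (k l : Fin n) : Zq δ z k l = -Zq δ z l k := by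
  simp only [Zq]
  rw [hδ k l]
  ring

lemma key_s2 {n : ℕ} {m : Fin n → ℂ} (S : SingularSeq n m)
    (A B : Matrix (Fin n) (Fin n) ℕ) (hAB : IsZWMatrices S A B)
    (i j : Fin n) (hij : i ≠ j) (hmij : m i + m j ≠ 0)
    (hA : A i j = 1) (hB : B i j = 1) :
    (∑ k ∈ univ.filter (fun k => k ≠ i ∧ k ≠ j), (A k i + A k j)) ≠ 0 := by
  intro hsum
  set s : Finset (Fin n) := univ.filter (fun k => k ≠ i ∧ k ≠ j) with hs
  have hA0 : ∀ l ∈ s, A l i = 0 ∧ A l j = 0 := by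
    intro l hl
    have := Finset.sum_eq_zero_iff.mp hsum l hl
    omega
  have hmem : ∀ l ∈ s, l ≠ i ∧ l ≠ j := by
    intro l hl
    simpa [hs] using hl
  obtain ⟨L, hL⟩ := S.conv_Z i j hij
  obtain ⟨M, hM⟩ := S.conv_W i j hij
  obtain ⟨Wi, hWi⟩ := S.conv_w i
  obtain ⟨Wj, hWj⟩ := S.conv_w j
  have hL0 : L ≠ 0 := by
    intro h; subst h; exact ((hAB.off_A i j hij).mp hA) hL
  have hM0 : M ≠ 0 := by
    intro h; subst h; exact ((hAB.off_B i j hij).mp hB) hM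
  -- vanishing of the Z's touching i or j
  have hvani : ∀ l ∈ s,
      Tendsto (fun N => (S.eps N : ℂ) ^ 2 * Zq (S.delta N) (S.z N) i l) atTop (nhds 0) := by
    intro l hl
    obtain ⟨hli, _⟩ := hmem l hl
    have h0 : Tendsto (fun N => (S.eps N : ℂ) ^ 2 * Zq (S.delta N) (S.z N) l i)
        atTop (nhds 0) := by
      by_contra hc
      have := (hAB.off_A l i hli).mpr hc
      have := (hA0 l hl).1
      omega
    have := h0.neg
    rw [neg_zero] at this
    refine this.congr fun N => ?_
    rw [Zq_anti (S.delta N) (S.delta_symm N) (S.z N) i l]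
    ring
  have hvanj : ∀ l ∈ s,
      Tendsto (fun N => (S.eps N : ℂ) ^ 2 * Zq (S.delta N) (S.z N) j l) atTop (nhds 0) := by
    intro l hl
    obtain ⟨_, hlj⟩ := hmem l hl
    have h0 : Tendsto (fun N => (S.eps N : ℂ) ^ 2 * Zq (S.delta N) (S.z N) l j)
        atTop (nhds 0) := by
      by_contra hc
      have := (hAB.off_A l j hlj).mpr hc
      have := (hA0 l hl).2
      omega
    have := h0.neg
    rw [neg_zero] at this
    refine this.congr fun N => ?_
    rw [Zq_anti (S.delta N) (S.delta_symm N) (S.z N) j l]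
    ring
  -- set decompositions
  have hseti : (univ.erase i : Finset (Fin n)) = insert j s := by
    ext k
    simp only [hs, mem_erase, mem_insert, mem_filter, mem_univ, true_and, and_true]
    constructor
    · intro h
      by_cases hk : k = j
      · exact Or.inl hk
      · exact Or.inr ⟨h, hk⟩
    · rintro (rfl | ⟨h1, _⟩)
      · exact hij.symm
      · exact h1
  have hsetj : (univ.erase j : Finset (Fin n)) = insert i s := by
    ext k
    simp only [hs, mem_erase, mem_insert, mem_filter, mem_univ, true_and, and_true]
    constructor
    · intro h
      by_cases hk : k = i
      · exact Or.inl hk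
      · exact Or.inr ⟨hk, h⟩
    · rintro (rfl | ⟨_, h2⟩)
      · exact hij
      · exact h2
  have hjs : j ∉ s := by simp [hs]
  have his : i ∉ s := by simp [hs]
  -- per-term identity
  have hident : ∀ N, S.z N i - S.z N j - (m i + m j) * Zq (S.delta N) (S.z N) i j =
      ∑ l ∈ s, m l * (Zq (S.delta N) (S.z N) i l - Zq (S.delta N) (S.z N) j l) := by
    intro N
    have hzi := S.eq_z N i
    have hzj := S.eq_z N j
    rw [hseti, Finset.sum_insert hjs] at hzi
    rw [hsetj, Finset.sum_insert his] at hzj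
    have hanti : Zq (S.delta N) (S.z N) j i = -Zq (S.delta N) (S.z N) i j :=
      Zq_anti (S.delta N) (S.delta_symm N) (S.z N) j i
    rw [hzi, hzj, hanti]
    simp only [mul_sub]
    rw [Finset.sum_sub_distrib]
    ring
  -- remainder tends to zero
  have hrem : Tendsto (fun N => (S.eps N : ℂ) ^ 2 *
      ∑ l ∈ s, m l * (Zq (S.delta N) (S.z N) i l - Zq (S.delta N) (S.z N) j l))
      atTop (nhds 0) := by
    have h1 : ∀ N, (S.eps N : ℂ) ^ 2 *
        ∑ l ∈ s, m l * (Zq (S.delta N) (S.z N) i l - Zq (S.delta N) (S.z N) j l) =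
        ∑ l ∈ s, m l * ((S.eps N : ℂ) ^ 2 * Zq (S.delta N) (S.z N) i l -
          (S.eps N : ℂ) ^ 2 * Zq (S.delta N) (S.z N) j l) := by
      intro N
      rw [Finset.mul_sum]
      exact Finset.sum_congr rfl fun l _ => by ring
    have h2 : Tendsto (fun N => ∑ l ∈ s, m l * ((S.eps N : ℂ) ^ 2 * Zq (S.delta N) (S.z N) i l -
        (S.eps N : ℂ) ^ 2 * Zq (S.delta N) (S.z N) j l)) atTop (nhds (∑ l ∈ s, (0 : ℂ))) := by
      refine tendsto_finset_sum s fun l hl => ?_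
      have := ((hvani l hl).sub (hvanj l hl)).const_mul (m l)
      simpa using this
    rw [Finset.sum_const_zero] at h2
    exact h2.congr fun N => (h1 N).symm
  -- limit of eps^2 (z_i - z_j)
  have hdiff : Tendsto (fun N => (S.eps N : ℂ) ^ 2 * (S.z N i - S.z N j)) atTop
      (nhds ((m i + m j) * L)) := by
    have h3 := (hL.const_mul (m i + m j)).add hrem
    rw [add_zero] at h3
    exact h3.congr fun N => by linear_combination (-(S.eps N : ℂ) ^ 2) * (hident N)
  have hwdiff : Tendsto (fun N => (S.eps N : ℂ) ^ 2 * (S.w N i - S.w N j)) atTop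
      (nhds (Wi - Wj)) := by
    have := hWi.sub hWj
    exact this.congr fun N => by ring
  set L2 : ℂ := (m i + m j) * L with hL2
  have hL20 : L2 ≠ 0 := mul_ne_zero hmij hL0
  -- the cube identity
  have hcube : ∀ N, ((S.eps N : ℂ) ^ 2 * Zq (S.delta N) (S.z N) i j) *
      ((S.eps N : ℂ) ^ 2 * Zq (S.delta N) (S.w N) i j) *
      ((S.eps N : ℂ) ^ 2 * (S.z N i - S.z N j)) ^ 2 *
      ((S.eps N : ℂ) ^ 2 * (S.w N i - S.w N j)) ^ 2 = (S.eps N : ℂ) ^ 12 := by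
    intro N
    have hnorm := S.normalize N i j hij
    have h3 : (S.delta N i j ^ 2 * (S.z N j - S.z N i) * (S.w N j - S.w N i)) ^ 3 = 1 ^ 3 := by
      rw [hnorm]
    simp only [Zq]
    linear_combination ((S.eps N : ℂ) ^ 12) * h3
  -- limit of LHS of cube identity
  have hlhs : Tendsto (fun N => ((S.eps N : ℂ) ^ 2 * Zq (S.delta N) (S.z N) i j) *
      ((S.eps N : ℂ) ^ 2 * Zq (S.delta N) (S.w N) i j) *
      ((S.eps N : ℂ) ^ 2 * (S.z N i - S.z N j)) ^ 2 *
      ((S.eps N : ℂ) ^ 2 * (S.w N i - S.w N j)) ^ 2) atTop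
      (nhds (L * M * L2 ^ 2 * (Wi - Wj) ^ 2)) :=
    ((hL.mul hM).mul (hdiff.pow 2)).mul (hwdiff.pow 2)
  have heps : Tendsto (fun N => (S.eps N : ℂ) ^ 12) atTop (nhds 0) := by
    have h0 : Tendsto (fun N => ((S.eps N : ℝ) : ℂ)) atTop (nhds ((0 : ℝ) : ℂ)) :=
      (Complex.continuous_ofReal.tendsto 0).comp S.eps_lim
    have := h0.pow 12
    simpa using this
  have hzero : L * M * L2 ^ 2 * (Wi - Wj) ^ 2 = 0 := by
    have h1 := hlhs.congr fun N => hcube N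
    exact tendsto_nhds_unique h1 heps
  have hWij0 : Wi - Wj = 0 := by
    have h1 := mul_eq_zero.mp hzero
    rcases h1 with h1 | h1
    · exfalso
      rcases mul_eq_zero.mp h1 with h2 | h2
      · rcases mul_eq_zero.mp h2 with h3 | h3
        · exact hL0 h3
        · exact hM0 h3
      · exact hL20 (pow_eq_zero_iff (two_ne_zero) |>.mp h2)
    · exact pow_eq_zero_iff (two_ne_zero) |>.mp h1
  -- the exchange identity
  have hexch : ∀ N, ((S.eps N : ℂ) ^ 2 * Zq (S.delta N) (S.z N) i j) *
      ((S.eps N : ℂ) ^ 2 * (S.w N i - S.w N j)) =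
      ((S.eps N : ℂ) ^ 2 * Zq (S.delta N) (S.w N) i j) *
      ((S.eps N : ℂ) ^ 2 * (S.z N i - S.z N j)) := by
    intro N
    simp only [Zq]
    ring
  have h1 : Tendsto (fun N => ((S.eps N : ℂ) ^ 2 * Zq (S.delta N) (S.z N) i j) *
      ((S.eps N : ℂ) ^ 2 * (S.w N i - S.w N j))) atTop (nhds (L * (Wi - Wj))) :=
    hL.mul hwdiff
  have h2 : Tendsto (fun N => ((S.eps N : ℂ) ^ 2 * Zq (S.delta N) (S.w N) i j) *
      ((S.eps N : ℂ) ^ 2 * (S.z N i - S.z N j))) atTop (nhds (M * L2)) :=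
    hM.mul hdiff
  have heq : L * (Wi - Wj) = M * L2 :=
    tendsto_nhds_unique (h1.congr fun N => hexch N) h2
  rw [hWij0, mul_zero] at heq
  exact (mul_ne_zero hM0 hL20) heq.symm

theorem rule_of_two_column_sums (n : ℕ) (hn : 2 ≤ n) (m : Fin n → ℂ)
    (hm : ∀ I : Finset (Fin n), I.Nonempty → ∑ k ∈ I, m k ≠ 0)
    (S : SingularSeq n m) (A B : Matrix (Fin n) (Fin n) ℕ)
    (hAB : IsZWMatrices S A B) :
    ∀ i j : Fin n, i < j → A i j + B i j = 2 →
      (∑ k ∈ univ.filter (fun k => k ≠ i ∧ k ≠ j), (A k i + A k j)) *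
        (∑ k ∈ univ.filter (fun k => k ≠ i ∧ k ≠ j), (B k i + B k j)) ≠ 0 := by
  intro i j hij hC
  have hij' : i ≠ j := ne_of_lt hij
  have hA : A i j = 1 := by
    rcases hAB.zeroOne_A i j with h | h <;> rcases hAB.zeroOne_B i j with h' | h' <;> omega
  have hB : B i j = 1 := by
    rcases hAB.zeroOne_A i j with h | h <;> rcases hAB.zeroOne_B i j with h' | h' <;> omega
  have hmij : m i + m j ≠ 0 := by
    have := hm {i, j} ⟨i, by simp⟩
    rwa [Finset.sum_pair hij'] at this
  refine Nat.mul_ne_zero ?_ ?_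
  · exact key_s2 S A B hAB i j hij' hmij hA hB
  · exact key_s2 (SingularSeq.swap S) B A hAB.swap i j hij' hmij hB hA
end

section
/- (Rule of Circling) Let A and B be the z-matrix and w-matrix of a singular sequence. Then for any 1 ≤ i < j ≤ n, a_{ij}(b_{ii} + b_{jj}) ≠ 1 and b_{ij}(a_{ii} + a_{jj}) ≠ 1. -/
open Filter Finset

private lemma key_aux {n : ℕ} (eps : ℕ → ℝ) (z w : ℕ → Fin n → ℂ)
    (δ : ℕ → Fin n → Fin n → ℂ) (i j : Fin n)
    (eps_pos : ∀ N, 0 < eps N) (eps_lim : Tendsto eps atTop (nhds 0))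
    (hnorm : ∀ N, δ N i j ^ 2 * (z N j - z N i) * (w N j - w N i) = 1)
    (boundZ : ∀ N, ‖Zq (δ N) (z N) i j‖ ≤ eps N ^ (-2 : ℤ))
    (boundW : ∀ N, ‖Zq (δ N) (w N) i j‖ ≤ eps N ^ (-2 : ℤ))
    (L : ℂ) (hL : Tendsto (fun N => (eps N : ℂ) ^ 2 * Zq (δ N) (z N) i j) atTop (nhds L))
    (hL0 : L ≠ 0) :
    Tendsto (fun N => (eps N : ℂ) ^ 2 * (w N i - w N j)) atTop (nhds 0) := by
  have hLpos : (0 : ℝ) < ‖L‖ := norm_pos_iff.mpr hL0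
  -- eventually ‖ε² Z‖ ≥ ‖L‖/2
  have hev : ∀ᶠ N in atTop, ‖L‖ / 2 ≤ ‖(eps N : ℂ) ^ 2 * Zq (δ N) (z N) i j‖ :=
    hL.norm.eventually (eventually_ge_nhds (by linarith))
  -- pointwise bound on ‖δ‖
  have hδle : ∀ N, ‖δ N i j‖ ≤ (eps N)⁻¹ := by
    intro N
    have hpos : (0:ℝ) < eps N := eps_pos N
    have hZW : Zq (δ N) (z N) i j * Zq (δ N) (w N) i j = (δ N i j) ^ 4 := by
      simp only [Zq]
      linear_combination (δ N i j) ^ 4 * hnorm N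
    have h4 : ‖δ N i j‖ ^ 4 ≤ ((eps N)⁻¹) ^ 4 := by
      have h1 : ‖δ N i j‖ ^ 4
          = ‖Zq (δ N) (z N) i j‖ * ‖Zq (δ N) (w N) i j‖ := by
        rw [← norm_mul, hZW, norm_pow]
      have he : eps N ^ (-2 : ℤ) = (eps N ^ 2)⁻¹ := by
        rw [zpow_neg]; norm_cast
      have := mul_le_mul (boundZ N) (boundW N) (norm_nonneg _) (by positivity)
      rw [h1]
      calc ‖Zq (δ N) (z N) i j‖ * ‖Zq (δ N) (w N) i j‖
          ≤ eps N ^ (-2:ℤ) * eps N ^ (-2:ℤ) := this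
        _ = ((eps N)⁻¹) ^ 4 := by rw [he]; field_simp
    exact le_of_pow_le_pow_left₀ (by norm_num) (by positivity) h4
  -- squeeze
  apply squeeze_zero_norm' (a := fun N => 2 / ‖L‖ * eps N ^ 3)
  · filter_upwards [hev] with N hN
    have hpos : (0:ℝ) < eps N := eps_pos N
    have key : ‖(eps N : ℂ) ^ 2 * (w N i - w N j)‖ * ‖(eps N : ℂ) ^ 2 * Zq (δ N) (z N) i j‖
        ≤ eps N ^ 3 := by
      rw [← norm_mul]
      have hZw : Zq (δ N) (z N) i j * (w N i - w N j) = δ N i j := by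
        simp only [Zq]
        linear_combination (δ N i j) * hnorm N
      have : (eps N : ℂ) ^ 2 * (w N i - w N j) * ((eps N : ℂ) ^ 2 * Zq (δ N) (z N) i j)
          = (eps N : ℂ) ^ 4 * δ N i j := by
        linear_combination ((eps N : ℂ))^4 * hZw
      rw [this, norm_mul]
      have h1 : ‖((eps N : ℂ)) ^ 4‖ = eps N ^ 4 := by
        rw [norm_pow, Complex.norm_real, Real.norm_of_nonneg hpos.le]
      rw [h1]
      calc eps N ^ 4 * ‖δ N i j‖ ≤ eps N ^ 4 * (eps N)⁻¹ :=
            mul_le_mul_of_nonneg_left (hδle N) (by positivity)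
        _ = eps N ^ 3 := by field_simp
    have hc : (0:ℝ) < ‖L‖ / 2 := by positivity
    have := le_trans (mul_le_mul_of_nonneg_left hN (norm_nonneg _)) key
    calc ‖(eps N : ℂ) ^ 2 * (w N i - w N j)‖
        ≤ eps N ^ 3 / (‖L‖/2) := (le_div_iff₀ hc).mpr this
      _ = 2 / ‖L‖ * eps N ^ 3 := by field_simp
  · have : Tendsto (fun N => eps N ^ 3) atTop (nhds 0) := by
      simpa using eps_lim.pow 3
    simpa using this.const_mul (2 / ‖L‖)

private lemma lim_iff {f g : ℕ → ℂ} {L1 L2 : ℂ}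
    (hf : Tendsto f atTop (nhds L1)) (hg : Tendsto g atTop (nhds L2))
    (hsub : Tendsto (fun N => f N - g N) atTop (nhds 0)) :
    (Tendsto f atTop (nhds 0) ↔ Tendsto g atTop (nhds 0)) := by
  have hL : L1 = L2 := by
    have := hf.sub hg
    have h := tendsto_nhds_unique this hsub
    exact sub_eq_zero.mp h
  constructor
  · intro h
    have : L1 = 0 := tendsto_nhds_unique hf h
    rw [hL] at this; rwa [this] at hg
  · intro h
    have : L2 = 0 := tendsto_nhds_unique hg h
    rw [← hL] at this; rwa [this] at hf

theorem rule_of_circling (n : ℕ) (hn : 2 ≤ n) (m : Fin n → ℂ)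
    (hm : ∀ I : Finset (Fin n), I.Nonempty → ∑ k ∈ I, m k ≠ 0)
    (S : SingularSeq n m) (A B : Matrix (Fin n) (Fin n) ℕ)
    (hAB : IsZWMatrices S A B) :
    ∀ i j : Fin n, i < j →
      A i j * (B i i + B j j) ≠ 1 ∧ B i j * (A i i + A j j) ≠ 1 := by
  intro i j hij
  have hne : i ≠ j := ne_of_lt hij
  -- bounds from max conditions
  have bZ : ∀ N, ‖Zq (S.delta N) (S.z N) i j‖ ≤ S.eps N ^ (-2 : ℤ) :=
    fun N => (S.maxZ N).2 (Or.inr ⟨i, j, hne, rfl⟩)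
  have bW : ∀ N, ‖Zq (S.delta N) (S.w N) i j‖ ≤ S.eps N ^ (-2 : ℤ) :=
    fun N => (S.maxW N).2 (Or.inr ⟨i, j, hne, rfl⟩)
  -- A i j = 1 implies B i i = B j j
  have keyA : A i j = 1 → B i i = B j j := by
    intro hA
    obtain ⟨L, hL⟩ := S.conv_Z i j hne
    have hL0 : L ≠ 0 := by
      intro h; rw [h] at hL
      exact ((hAB.off_A i j hne).mp hA) hL
    have hsub : Tendsto (fun N => (S.eps N : ℂ) ^ 2 * (S.w N i - S.w N j)) atTop (nhds 0) :=
      key_aux S.eps S.z S.w S.delta i j S.eps_pos S.eps_lim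
        (fun N => S.normalize N i j hne) bZ bW L hL hL0
    obtain ⟨L1, h1⟩ := S.conv_w i
    obtain ⟨L2, h2⟩ := S.conv_w j
    have hiff := lim_iff h1 h2 (by simpa [mul_sub] using hsub)
    rcases hAB.zeroOne_B i i with e1 | e1 <;> rcases hAB.zeroOne_B j j with e2 | e2
    · omega
    · exfalso
      have hJ := (hAB.diag_B j).mp e2
      have hz : Tendsto (fun N => (S.eps N : ℂ) ^ 2 * S.w N i) atTop (nhds 0) := by
        by_contra hc
        have := (hAB.diag_B i).mpr hc
        omega
      exact hJ (hiff.mp hz)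
    · exfalso
      have hI := (hAB.diag_B i).mp e1
      have hz : Tendsto (fun N => (S.eps N : ℂ) ^ 2 * S.w N j) atTop (nhds 0) := by
        by_contra hc
        have := (hAB.diag_B j).mpr hc
        omega
      exact hI (hiff.mpr hz)
    · omega
  -- B i j = 1 implies A i i = A j j
  have keyB : B i j = 1 → A i i = A j j := by
    intro hB
    obtain ⟨L, hL⟩ := S.conv_W i j hne
    have hL0 : L ≠ 0 := by
      intro h; rw [h] at hL
      exact ((hAB.off_B i j hne).mp hB) hL
    have hsub : Tendsto (fun N => (S.eps N : ℂ) ^ 2 * (S.z N i - S.z N j)) atTop (nhds 0) :=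
      key_aux S.eps S.w S.z S.delta i j S.eps_pos S.eps_lim
        (fun N => by linear_combination S.normalize N i j hne) bW bZ L hL hL0
    obtain ⟨L1, h1⟩ := S.conv_z i
    obtain ⟨L2, h2⟩ := S.conv_z j
    have hiff := lim_iff h1 h2 (by simpa [mul_sub] using hsub)
    rcases hAB.zeroOne_A i i with e1 | e1 <;> rcases hAB.zeroOne_A j j with e2 | e2
    · omega
    · exfalso
      have hJ := (hAB.diag_A j).mp e2
      have hz : Tendsto (fun N => (S.eps N : ℂ) ^ 2 * S.z N i) atTop (nhds 0) := by
        by_contra hc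
        have := (hAB.diag_A i).mpr hc
        omega
      exact hJ (hiff.mp hz)
    · exfalso
      have hI := (hAB.diag_A i).mp e1
      have hz : Tendsto (fun N => (S.eps N : ℂ) ^ 2 * S.z N j) atTop (nhds 0) := by
        by_contra hc
        have := (hAB.diag_A j).mpr hc
        omega
      exact hI (hiff.mpr hz)
    · omega
  constructor
  · intro h
    have hA1 : A i j = 1 := by
      rcases hAB.zeroOne_A i j with e | e
      · rw [e] at h; omega
      · exact e
    have := keyA hA1
    rw [hA1] at h
    omega
  · intro h
    have hB1 : B i j = 1 := by
      rcases hAB.zeroOne_B i j with e | e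
      · rw [e] at h; omega
      · exact e
    have := keyB hB1
    rw [hB1] at h
    omega
end

section
/- (First Rule of Trace) Let A and B be the z-matrix and w-matrix of a singular sequence. Then the trace of A is not equal to 1, and the trace of B is not equal to 1. -/
open Filter Finset

lemma trace_key (n : ℕ) (m : Fin n → ℂ) (hm : ∀ i, m i ≠ 0)
    (z : ℕ → Fin n → ℂ) (δ : ℕ → Fin n → Fin n → ℂ) (eps : ℕ → ℝ)
    (hsymm : ∀ N k l, δ N k l = δ N l k)
    (heq : ∀ N k, z N k = ∑ l ∈ univ.erase k, m l * Zq (δ N) (z N) k l)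
    (conv : ∀ k, ∃ L, Tendsto (fun N => (eps N : ℂ)^2 * z N k) atTop (nhds L))
    (d : Fin n → ℕ) (hd01 : ∀ i, d i = 0 ∨ d i = 1)
    (hdiag : ∀ i, d i = 1 ↔ ¬ Tendsto (fun N => (eps N:ℂ)^2 * z N i) atTop (nhds 0)) :
    ∑ i, d i ≠ 1 := by
  -- the weighted sum vanishes for every N
  have hzero : ∀ N, ∑ k, m k * z N k = 0 := by
    intro N
    set f : Fin n → Fin n → ℂ := fun k l => m k * (m l * Zq (δ N) (z N) k l) with hf
    have h1 : ∑ k, m k * z N k = ∑ k, ∑ l, f k l := by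
      refine Finset.sum_congr rfl fun k _ => ?_
      rw [heq N k, Finset.mul_sum, Finset.sum_erase _ (by simp [hf, Zq])]
    have hanti : ∀ k l, f k l = -(f l k) := by
      intro k l
      simp only [hf, Zq, hsymm N k l]
      ring
    have h2 : ∑ k, ∑ l, f k l = -∑ k, ∑ l, f k l := by
      calc ∑ k, ∑ l, f k l = ∑ l, ∑ k, f k l := Finset.sum_comm
        _ = ∑ l, ∑ k, -(f l k) :=
            Finset.sum_congr rfl fun l _ => Finset.sum_congr rfl fun k _ => hanti k l
        _ = -∑ l, ∑ k, f l k := by simp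
    rw [h1]
    have h3 : ∑ k, ∑ l, f k l + ∑ k, ∑ l, f k l = 0 := by linear_combination h2
    exact add_self_eq_zero.mp h3
  -- suppose the trace is 1
  intro htr
  -- find the unique nonzero diagonal index
  obtain ⟨i₀, hi₀⟩ : ∃ i, d i ≠ 0 := by
    by_contra h
    push_neg at h
    simp [Finset.sum_congr rfl fun i _ => h i] at htr
  have hdi₀ : d i₀ = 1 := (hd01 i₀).resolve_left hi₀
  have hrest : ∀ j, j ≠ i₀ → d j = 0 := by
    intro j hj
    have hsplit : d i₀ + ∑ j ∈ univ.erase i₀, d j = 1 := by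
      rw [← htr, Finset.add_sum_erase _ _ (mem_univ i₀)]
    rw [hdi₀] at hsplit
    have : ∑ j ∈ univ.erase i₀, d j = 0 := by omega
    exact (Finset.sum_eq_zero_iff.mp this) j (by simp [hj])
  -- limits
  choose L hL using conv
  have hLj : ∀ j, j ≠ i₀ → L j = 0 := by
    intro j hj
    have h0 : Tendsto (fun N => (eps N:ℂ)^2 * z N j) atTop (nhds 0) := by
      by_contra h
      have h1 := (hdiag j).mpr h
      rw [hrest j hj] at h1
      exact absurd h1 (by norm_num)
    exact tendsto_nhds_unique (hL j) h0
  have hsum : Tendsto (fun N => ∑ k, m k * ((eps N:ℂ)^2 * z N k)) atTop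
      (nhds (∑ k, m k * L k)) :=
    tendsto_finset_sum _ fun k _ => (hL k).const_mul (m k)
  have hzero' : ∀ N, ∑ k, m k * ((eps N:ℂ)^2 * z N k) = 0 := by
    intro N
    have : ∑ k, m k * ((eps N:ℂ)^2 * z N k) = (eps N:ℂ)^2 * ∑ k, m k * z N k := by
      rw [Finset.mul_sum]; exact Finset.sum_congr rfl fun k _ => by ring
    rw [this, hzero N, mul_zero]
  have hlim0 : (∑ k, m k * L k) = 0 := by
    have : Tendsto (fun _ : ℕ => (0:ℂ)) atTop (nhds (∑ k, m k * L k)) := by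
      simpa [hzero'] using hsum
    exact (tendsto_nhds_unique tendsto_const_nhds this).symm
  have hsingle : ∑ k, m k * L k = m i₀ * L i₀ :=
    Finset.sum_eq_single i₀ (fun j _ hj => by simp [hLj j hj]) (by simp)
  have hLi₀ : L i₀ = 0 := by
    have := hsingle ▸ hlim0
    exact (mul_eq_zero.mp this).resolve_left (hm i₀)
  exact ((hdiag i₀).mp hdi₀) (hLi₀ ▸ hL i₀)

theorem first_rule_of_trace (n : ℕ) (hn : 2 ≤ n) (m : Fin n → ℂ)
    (hm : ∀ I : Finset (Fin n), I.Nonempty → ∑ k ∈ I, m k ≠ 0)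
    (S : SingularSeq n m) (A B : Matrix (Fin n) (Fin n) ℕ)
    (hAB : IsZWMatrices S A B) :
    Matrix.trace A ≠ 1 ∧ Matrix.trace B ≠ 1 := by
  have hm1 : ∀ i, m i ≠ 0 := fun i => by
    simpa using hm {i} ⟨i, Finset.mem_singleton_self i⟩
  have htrA : Matrix.trace A = ∑ i, A i i := by simp [Matrix.trace, Matrix.diag]
  have htrB : Matrix.trace B = ∑ i, B i i := by simp [Matrix.trace, Matrix.diag]
  constructor
  · rw [htrA]
    exact trace_key n m hm1 S.z S.delta S.eps S.delta_symm S.eq_z S.conv_z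
      (fun i => A i i) (fun i => hAB.zeroOne_A i i) hAB.diag_A
  · rw [htrB]
    exact trace_key n m hm1 S.w S.delta S.eps S.delta_symm S.eq_w S.conv_w
      (fun i => B i i) (fun i => hAB.zeroOne_B i i) hAB.diag_B
end

section
/- (First Rule of Trace-2 Matrices) Let A and B be the z-matrix and w-matrix of a singular sequence. If the trace of A equals 2 and a_{ii} = a_{jj} = 1 for some i ≠ j, then a_{ij} = 1 and a_{ik} = a_{jk} for every k ∉ {i, j}. The same statement holds with A replaced by B. -/
open Filter Finset

section Aux

variable {n : ℕ} {m : Fin n → ℂ}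

lemma abs_e (S : SingularSeq n m) (N : ℕ) :
    ‖((S.eps N : ℂ)) ^ 2‖ = S.eps N ^ 2 := by
  rw [norm_pow, Complex.norm_real, Real.norm_of_nonneg (S.eps_pos N).le]

lemma z_bound (S : SingularSeq n m) (N : ℕ) (k : Fin n) :
    ‖S.z N k‖ ≤ (S.eps N ^ 2)⁻¹ := by
  have h := (S.maxZ N).2 (Or.inl ⟨k, rfl⟩)
  rwa [show S.eps N ^ (-2 : ℤ) = (S.eps N ^ 2)⁻¹ by
    rw [zpow_neg, zpow_ofNat]] at h

lemma Zq_z_bound (S : SingularSeq n m) (N : ℕ) (k l : Fin n) (h : k ≠ l) :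
    ‖Zq (S.delta N) (S.z N) k l‖ ≤ (S.eps N ^ 2)⁻¹ := by
  have h2 := (S.maxZ N).2 (Or.inr ⟨k, l, h, rfl⟩)
  rwa [show S.eps N ^ (-2 : ℤ) = (S.eps N ^ 2)⁻¹ by
    rw [zpow_neg, zpow_ofNat]] at h2

lemma abs_sub_le' (x y : ℂ) : ‖x - y‖ ≤ ‖x‖ + ‖y‖ := by
  exact norm_sub_le x y

lemma z_ne (S : SingularSeq n m) (N : ℕ) {k l : Fin n} (h : k ≠ l) :
    S.z N k - S.z N l ≠ 0 := by
  intro h0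
  have hE := S.normalize N k l h
  have h1 : S.z N l - S.z N k = 0 := by linear_combination -h0
  rw [h1] at hE
  simp at hE

lemma d_ne (S : SingularSeq n m) (N : ℕ) {k l : Fin n} (h : k ≠ l) :
    S.delta N k l ≠ 0 := by
  intro h0
  have hE := S.normalize N k l h
  rw [h0] at hE
  simp at hE

lemma identA (S : SingularSeq n m) (N : ℕ) {k l : Fin n} (h : k ≠ l) :
    Zq (S.delta N) (S.z N) k l ^ 2 * (S.z N k - S.z N l) * (S.w N k - S.w N l) ^ 3 = 1 := by
  have hE := S.normalize N k l h
  simp only [Zq]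
  linear_combination ((S.delta N k l ^ 2 * (S.z N l - S.z N k) * (S.w N l - S.w N k)) ^ 2 +
    (S.delta N k l ^ 2 * (S.z N l - S.z N k) * (S.w N l - S.w N k)) + 1) * hE

lemma identB (S : SingularSeq n m) (N : ℕ) {k l : Fin n} (h : k ≠ l) :
    Zq (S.delta N) (S.w N) k l ^ 3 * (S.z N k - S.z N l) ^ 4 = Zq (S.delta N) (S.z N) k l := by
  have hE := S.normalize N k l h
  simp only [Zq]
  linear_combination (S.delta N k l ^ 3 * (S.z N k - S.z N l) *
    ((S.delta N k l ^ 2 * (S.z N l - S.z N k) * (S.w N l - S.w N k)) ^ 2 +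
      (S.delta N k l ^ 2 * (S.z N l - S.z N k) * (S.w N l - S.w N k)) + 1)) * hE

lemma identA_abs (S : SingularSeq n m) (N : ℕ) {k l : Fin n} (h : k ≠ l) :
    ‖Zq (S.delta N) (S.z N) k l‖ ^ 2 * ‖S.z N k - S.z N l‖ *
      ‖S.w N k - S.w N l‖ ^ 3 = 1 := by
  have h2 := congrArg norm (identA S N h)
  simpa [norm_mul, norm_pow] using h2

lemma identB_abs (S : SingularSeq n m) (N : ℕ) {k l : Fin n} (h : k ≠ l) :
    ‖Zq (S.delta N) (S.w N) k l‖ ^ 3 * ‖S.z N k - S.z N l‖ ^ 4 =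
      ‖Zq (S.delta N) (S.z N) k l‖ := by
  have h2 := congrArg norm (identB S N h)
  simpa [norm_mul, norm_pow] using h2

lemma sum_m_z (S : SingularSeq n m) (N : ℕ) : ∑ k, m k * S.z N k = 0 := by
  classical
  set F : Fin n → Fin n → ℂ := fun k l =>
    if k = l then 0 else m k * m l * Zq (S.delta N) (S.z N) k l with hF
  have h2 : ∀ k, m k * S.z N k = ∑ l, F k l := by
    intro k
    rw [S.eq_z N k, Finset.mul_sum, ← Finset.sum_erase_add univ (F k) (mem_univ k)]
    have hFkk : F k k = 0 := by simp [hF]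
    rw [hFkk, add_zero]
    refine Finset.sum_congr rfl fun l hl => ?_
    have hlk : l ≠ k := (mem_erase.1 hl).1
    simp only [hF, if_neg (Ne.symm hlk)]
    ring
  have hanti : ∀ k l, F l k = -F k l := by
    intro k l
    by_cases h : k = l
    · subst h; simp [hF]
    · simp only [hF, if_neg h, if_neg (Ne.symm h)]
      unfold Zq
      rw [S.delta_symm N l k]
      ring
  have hT : ∑ k, m k * S.z N k = ∑ k, ∑ l, F k l := Finset.sum_congr rfl fun k _ => h2 k
  have hcomm : ∑ k, ∑ l, F k l = ∑ k, ∑ l, F l k := Finset.sum_comm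
  have hneg : (∑ k, ∑ l, F k l) = -(∑ k, ∑ l, F k l) := by
    nth_rewrite 1 [hcomm]
    rw [← Finset.sum_neg_distrib]
    refine Finset.sum_congr rfl fun k _ => ?_
    rw [← Finset.sum_neg_distrib]
    exact Finset.sum_congr rfl fun l _ => by rw [hanti]
  rw [hT]
  linear_combination hneg / 2

lemma small_w (S : SingularSeq n m) (k l : Fin n) (c : ℂ) (hc : c ≠ 0)
    (hu : Tendsto (fun N => ((S.eps N : ℂ)) ^ 2 * (S.z N k - S.z N l)) atTop (nhds c)) :
    ∃ C : ℝ, 0 < C ∧ ∀ᶠ N in atTop,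
      ‖Zq (S.delta N) (S.w N) k l‖ ≤ C * S.eps N ^ 2 := by
  have hkl : k ≠ l := by
    rintro rfl
    have h0 : (fun N => ((S.eps N : ℂ)) ^ 2 * (S.z N k - S.z N k)) = fun _ => (0 : ℂ) := by
      funext N; ring
    rw [h0] at hu
    exact hc (tendsto_nhds_unique hu tendsto_const_nhds)
  obtain ⟨a, ha0, halt⟩ : ∃ a : ℝ, 0 < a ∧ a < ‖c‖ :=
    ⟨‖c‖ / 2, half_pos (norm_pos_iff.2 hc), half_lt_self (norm_pos_iff.2 hc)⟩
  set C : ℝ := max 1 (1 / a ^ 2) with hCdef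
  have hC1 : (1 : ℝ) ≤ C := le_max_left _ _
  refine ⟨C, lt_of_lt_of_le one_pos hC1, ?_⟩
  have habs : Tendsto (fun N => ‖((S.eps N : ℂ)) ^ 2 * (S.z N k - S.z N l)‖)
      atTop (nhds (‖c‖)) := by
    simpa using hu.norm
  have h1 : ∀ᶠ N in atTop,
      a ≤ ‖((S.eps N : ℂ)) ^ 2 * (S.z N k - S.z N l)‖ :=
    Filter.Tendsto.eventually_const_le halt habs
  filter_upwards [h1] with N hN
  have he2 : (0 : ℝ) < S.eps N ^ 2 := pow_pos (S.eps_pos N) 2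
  rw [norm_mul, abs_e] at hN
  have habsu : a / S.eps N ^ 2 ≤ ‖S.z N k - S.z N l‖ := by
    rw [div_le_iff₀ he2]
    nlinarith [norm_nonneg (S.z N k - S.z N l)]
  have hBabs := identB_abs S N hkl
  have hP := Zq_z_bound S N k l hkl
  set q := ‖Zq (S.delta N) (S.w N) k l‖ with hq
  set uu := ‖S.z N k - S.z N l‖ with huu
  have hq0 : 0 ≤ q := norm_nonneg _
  have h2 : q ^ 3 ≤ (S.eps N ^ 2)⁻¹ / (a / S.eps N ^ 2) ^ 4 := by
    rw [le_div_iff₀ (by positivity)]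
    have h4 : (a / S.eps N ^ 2) ^ 4 ≤ uu ^ 4 :=
      pow_le_pow_left₀ (by positivity) habsu 4
    calc q ^ 3 * (a / S.eps N ^ 2) ^ 4 ≤ q ^ 3 * uu ^ 4 := by
          exact mul_le_mul_of_nonneg_left h4 (by positivity)
      _ = ‖Zq (S.delta N) (S.z N) k l‖ := hBabs
      _ ≤ (S.eps N ^ 2)⁻¹ := hP
  have h3 : (S.eps N ^ 2)⁻¹ / (a / S.eps N ^ 2) ^ 4 = (S.eps N ^ 2) ^ 3 / a ^ 4 := by
    field_simp
  have hC3 : 1 / a ^ 4 ≤ C ^ 3 := by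
    rcases le_total 1 a with h | h
    · have hle : 1 / a ^ 4 ≤ 1 := by
        rw [div_le_one (by positivity)]
        exact one_le_pow₀ h
      calc 1 / a ^ 4 ≤ 1 := hle
        _ = 1 ^ 3 := by norm_num
        _ ≤ C ^ 3 := pow_le_pow_left₀ (by norm_num) hC1 3
    · have hmid : 1 / a ^ 4 ≤ (1 / a ^ 2) ^ 3 := by
        rw [div_pow, one_pow, div_le_div_iff₀ (by positivity) (by positivity)]
        have ha2 : a ^ 2 ≤ 1 := by nlinarith
        nlinarith [mul_le_mul_of_nonneg_left ha2 (pow_nonneg ha0.le 4)]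
      exact hmid.trans (pow_le_pow_left₀ (by positivity) (le_max_right _ _) 3)
  have final : q ^ 3 ≤ (C * S.eps N ^ 2) ^ 3 := by
    calc q ^ 3 ≤ (S.eps N ^ 2) ^ 3 / a ^ 4 := by rw [← h3]; exact h2
      _ = (1 / a ^ 4) * (S.eps N ^ 2) ^ 3 := by ring
      _ ≤ C ^ 3 * (S.eps N ^ 2) ^ 3 := mul_le_mul_of_nonneg_right hC3 (by positivity)
      _ = (C * S.eps N ^ 2) ^ 3 := by ring
  exact le_of_pow_le_pow_left₀ (by norm_num) (by positivity) final

lemma small_v (S : SingularSeq n m) (k l : Fin n) (c Λ : ℂ) (hc : c ≠ 0) (hΛ : Λ ≠ 0)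
    (hu : Tendsto (fun N => ((S.eps N : ℂ)) ^ 2 * (S.z N k - S.z N l)) atTop (nhds c))
    (hP : Tendsto (fun N => ((S.eps N : ℂ)) ^ 2 * Zq (S.delta N) (S.z N) k l) atTop (nhds Λ)) :
    ∃ C : ℝ, 0 < C ∧ ∀ᶠ N in atTop,
      ‖S.w N k - S.w N l‖ ≤ C * S.eps N ^ 2 := by
  have hkl : k ≠ l := by
    rintro rfl
    have h0 : (fun N => ((S.eps N : ℂ)) ^ 2 * (S.z N k - S.z N k)) = fun _ => (0 : ℂ) := by
      funext N; ring
    rw [h0] at hu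
    exact hc (tendsto_nhds_unique hu tendsto_const_nhds)
  set L : ℝ := (‖Λ‖ ^ 2 * ‖c‖)⁻¹ with hLdef
  have hbpos : 0 < ‖Λ‖ ^ 2 * ‖c‖ :=
    mul_pos (pow_pos (norm_pos_iff.2 hΛ) 2) (norm_pos_iff.2 hc)
  have hL0 : 0 ≤ L := by rw [hLdef]; positivity
  have habsP : Tendsto (fun N => ‖((S.eps N : ℂ)) ^ 2 * Zq (S.delta N) (S.z N) k l‖)
      atTop (nhds (‖Λ‖)) := by
    simpa using hP.norm
  have habsu : Tendsto (fun N => ‖((S.eps N : ℂ)) ^ 2 * (S.z N k - S.z N l)‖)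
      atTop (nhds (‖c‖)) := by
    simpa using hu.norm
  have hf : Tendsto (fun N => (‖((S.eps N : ℂ)) ^ 2 * Zq (S.delta N) (S.z N) k l‖ ^ 2 *
      ‖((S.eps N : ℂ)) ^ 2 * (S.z N k - S.z N l)‖)⁻¹) atTop (nhds L) :=
    ((habsP.pow 2).mul habsu).inv₀ hbpos.ne'
  have hev : ∀ᶠ N in atTop,
      (‖((S.eps N : ℂ)) ^ 2 * Zq (S.delta N) (S.z N) k l‖ ^ 2 *
        ‖((S.eps N : ℂ)) ^ 2 * (S.z N k - S.z N l)‖)⁻¹ ≤ L + 1 :=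
    Filter.Tendsto.eventually_le_const (lt_add_one L) hf
  set C : ℝ := max 1 (L + 1) with hCdef
  have hC1 : (1 : ℝ) ≤ C := le_max_left _ _
  refine ⟨C, lt_of_lt_of_le one_pos hC1, ?_⟩
  filter_upwards [hev] with N hN
  have he2 : (0 : ℝ) < S.eps N ^ 2 := pow_pos (S.eps_pos N) 2
  have hu0 : S.z N k - S.z N l ≠ 0 := z_ne S N hkl
  have hP0 : Zq (S.delta N) (S.z N) k l ≠ 0 := by
    unfold Zq
    exact mul_ne_zero (pow_ne_zero _ (d_ne S N hkl)) hu0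
  set p := ‖Zq (S.delta N) (S.z N) k l‖ with hp
  set uu := ‖S.z N k - S.z N l‖ with huu
  set vv := ‖S.w N k - S.w N l‖ with hvv
  have hp0 : 0 < p := norm_pos_iff.2 hP0
  have huu0 : 0 < uu := norm_pos_iff.2 hu0
  have hvv0 : 0 ≤ vv := norm_nonneg _
  have hAabs := identA_abs S N hkl
  rw [norm_mul, norm_mul, abs_e] at hN
  have hval : vv ^ 3 = (p ^ 2 * uu)⁻¹ := by
    field_simp
    linear_combination hAabs
  have hval2 : ((S.eps N ^ 2 * p) ^ 2 * (S.eps N ^ 2 * uu))⁻¹ =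
      (p ^ 2 * uu)⁻¹ / (S.eps N ^ 2) ^ 3 := by
    field_simp
  rw [hval2, div_le_iff₀ (by positivity)] at hN
  have hfin : vv ^ 3 ≤ (C * S.eps N ^ 2) ^ 3 := by
    rw [hval]
    calc (p ^ 2 * uu)⁻¹ ≤ (L + 1) * (S.eps N ^ 2) ^ 3 := hN
      _ ≤ C ^ 3 * (S.eps N ^ 2) ^ 3 := by
          have h1 : L + 1 ≤ C := le_max_right _ _
          have h2 : C ≤ C ^ 3 := le_self_pow₀ hC1 (by norm_num)
          exact mul_le_mul_of_nonneg_right (h1.trans h2) (by positivity)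
      _ = (C * S.eps N ^ 2) ^ 3 := by ring
  exact le_of_pow_le_pow_left₀ (by norm_num) (by positivity) hfin

lemma not_tendsto_zero (S : SingularSeq n m) (k l : Fin n) (hkl : k ≠ l) (C : ℝ) (hC : 0 < C)
    (hv : ∀ᶠ N in atTop, ‖S.w N k - S.w N l‖ ≤ C * S.eps N ^ 2) :
    ¬ Tendsto (fun N => ((S.eps N : ℂ)) ^ 2 * Zq (S.delta N) (S.z N) k l) atTop (nhds 0) := by
  intro hT
  have habs : Tendsto (fun N => ‖((S.eps N : ℂ)) ^ 2 * Zq (S.delta N) (S.z N) k l‖)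
      atTop (nhds 0) := by
    simpa using hT.norm
  set b := Real.sqrt (1 / (2 * C ^ 3)) with hb
  have hb0 : 0 < b := Real.sqrt_pos.2 (by positivity)
  have hsm : ∀ᶠ N in atTop,
      ‖((S.eps N : ℂ)) ^ 2 * Zq (S.delta N) (S.z N) k l‖ < b :=
    Filter.Tendsto.eventually_lt_const hb0 habs
  obtain ⟨N, hvN, hsN⟩ := (hv.and hsm).exists
  have he2 : (0 : ℝ) < S.eps N ^ 2 := pow_pos (S.eps_pos N) 2
  have hAabs := identA_abs S N hkl
  have hu1 : ‖S.z N k - S.z N l‖ ≤ 2 * (S.eps N ^ 2)⁻¹ := by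
    have b1 := z_bound S N k
    have b2 := z_bound S N l
    have b3 := abs_sub_le' (S.z N k) (S.z N l)
    linarith
  rw [norm_mul, abs_e] at hsN
  set p := ‖Zq (S.delta N) (S.z N) k l‖ with hp
  set uu := ‖S.z N k - S.z N l‖ with huu
  set vv := ‖S.w N k - S.w N l‖ with hvv
  have hp0 : 0 ≤ p := norm_nonneg _
  have huu0 : 0 ≤ uu := norm_nonneg _
  have hvv0 : 0 ≤ vv := norm_nonneg _
  have h1 : (1 : ℝ) ≤ p ^ 2 * (2 * (S.eps N ^ 2)⁻¹) * (C * S.eps N ^ 2) ^ 3 := by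
    rw [← hAabs]
    have hv3 : vv ^ 3 ≤ (C * S.eps N ^ 2) ^ 3 := pow_le_pow_left₀ hvv0 hvN 3
    calc p ^ 2 * uu * vv ^ 3 ≤ p ^ 2 * (2 * (S.eps N ^ 2)⁻¹) * vv ^ 3 := by
          exact mul_le_mul_of_nonneg_right (mul_le_mul_of_nonneg_left hu1 (by positivity))
            (by positivity)
      _ ≤ p ^ 2 * (2 * (S.eps N ^ 2)⁻¹) * (C * S.eps N ^ 2) ^ 3 := by
          exact mul_le_mul_of_nonneg_left hv3 (by positivity)
  have h2 : p ^ 2 * (2 * (S.eps N ^ 2)⁻¹) * (C * S.eps N ^ 2) ^ 3 =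
      2 * C ^ 3 * (S.eps N ^ 2 * p) ^ 2 := by
    field_simp
  have h3 : (S.eps N ^ 2 * p) ^ 2 < b ^ 2 := by
    have : 0 ≤ S.eps N ^ 2 * p := by positivity
    exact pow_lt_pow_left₀ hsN this (by norm_num)
  have hb2 : b ^ 2 = 1 / (2 * C ^ 3) := Real.sq_sqrt (by positivity)
  have h4 : 2 * C ^ 3 * (S.eps N ^ 2 * p) ^ 2 < 2 * C ^ 3 * b ^ 2 :=
    mul_lt_mul_of_pos_left h3 (by positivity)
  rw [hb2] at h4
  have h5 : 2 * C ^ 3 * (1 / (2 * C ^ 3)) = 1 := by field_simp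
  rw [h5] at h4
  rw [h2] at h1
  linarith

end Aux


def SingularSeq.symm {n : ℕ} {m : Fin n → ℂ} (S : SingularSeq n m) : SingularSeq n m where
  z := S.w
  w := S.z
  delta := S.delta
  eps := S.eps
  eps_pos := S.eps_pos
  eps_lim := S.eps_lim
  delta_symm := S.delta_symm
  eq_z := S.eq_w
  eq_w := S.eq_z
  normalize := fun N k l h => by linear_combination S.normalize N k l h
  maxZ := S.maxW
  maxW := S.maxZ
  conv_z := S.conv_w
  conv_w := S.conv_z
  conv_Z := S.conv_W
  conv_W := S.conv_Z

lemma IsZWMatrices.symm' {n : ℕ} {m : Fin n → ℂ} {S : SingularSeq n m}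
    {A B : Matrix (Fin n) (Fin n) ℕ} (h : IsZWMatrices S A B) :
    IsZWMatrices S.symm B A where
  zeroOne_A := h.zeroOne_B
  symm_A := h.symm_B
  zeroOne_B := h.zeroOne_A
  symm_B := h.symm_A
  diag_A := h.diag_B
  off_A := h.off_B
  diag_B := h.diag_A
  off_B := h.off_A

section Main

variable {n : ℕ} {m : Fin n → ℂ}

lemma ruleA (hm : ∀ I : Finset (Fin n), I.Nonempty → ∑ k ∈ I, m k ≠ 0)
    (S : SingularSeq n m) (A B : Matrix (Fin n) (Fin n) ℕ) (hAB : IsZWMatrices S A B)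
    (htr : Matrix.trace A = 2) :
    ∀ i j : Fin n, i ≠ j → A i i = 1 → A j j = 1 →
      A i j = 1 ∧ ∀ k : Fin n, k ≠ i → k ≠ j → A i k = A j k := by
  intro i j hij hi hj
  obtain ⟨ζ, hζ⟩ : ∃ ζ : Fin n → ℂ,
      ∀ k, Tendsto (fun N => ((S.eps N : ℂ)) ^ 2 * S.z N k) atTop (nhds (ζ k)) :=
    ⟨fun k => (S.conv_z k).choose, fun k => (S.conv_z k).choose_spec⟩
  have hdiag : ∀ k, A k k = 1 ↔ ζ k ≠ 0 := by
    intro k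
    rw [hAB.diag_A k]
    constructor
    · intro h hk
      exact h (hk ▸ hζ k)
    · intro h h0
      exact h (tendsto_nhds_unique (hζ k) h0)
  have htr' : ∑ k, A k k = 2 := by simpa [Matrix.trace, Matrix.diag] using htr
  have hjmem : j ∈ univ.erase i := mem_erase.2 ⟨hij.symm, mem_univ j⟩
  have hrest : ∀ k, k ≠ i → k ≠ j → A k k = 0 := by
    intro k hki hkj
    have h1 := Finset.sum_erase_add univ (fun k => A k k) (mem_univ i)
    have h2 := Finset.sum_erase_add (univ.erase i) (fun k => A k k) hjmem
    have h0 : ∑ x ∈ (univ.erase i).erase j, A x x = 0 := by omega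
    exact (Finset.sum_eq_zero_iff.1 h0) k
      (mem_erase.2 ⟨hkj, mem_erase.2 ⟨hki, mem_univ k⟩⟩)
  have hζi : ζ i ≠ 0 := (hdiag i).1 hi
  have hζj : ζ j ≠ 0 := (hdiag j).1 hj
  have hz0 : ∀ k, k ≠ i → k ≠ j → ζ k = 0 := by
    intro k h1 h2
    by_contra h
    have h3 := (hdiag k).2 h
    rw [hrest k h1 h2] at h3
    exact absurd h3 (by norm_num)
  have hmom : m i * ζ i + m j * ζ j = 0 := by
    have hzero : ∀ N, ∑ k, m k * (((S.eps N : ℂ)) ^ 2 * S.z N k) = 0 := by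
      intro N
      have hsame : ∑ k, m k * (((S.eps N : ℂ)) ^ 2 * S.z N k) =
          ((S.eps N : ℂ)) ^ 2 * ∑ k, m k * S.z N k := by
        rw [Finset.mul_sum]
        exact Finset.sum_congr rfl fun k _ => by ring
      rw [hsame, sum_m_z, mul_zero]
    have hlim : Tendsto (fun N => ∑ k, m k * (((S.eps N : ℂ)) ^ 2 * S.z N k)) atTop
        (nhds (∑ k, m k * ζ k)) :=
      tendsto_finset_sum _ fun k _ => (hζ k).const_mul (m k)
    have hsum : ∑ k, m k * ζ k = 0 := by
      have hlim0 : Tendsto (fun _ : ℕ => (0 : ℂ)) atTop (nhds (∑ k, m k * ζ k)) := by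
        simpa [hzero] using hlim
      exact (tendsto_nhds_unique hlim0 tendsto_const_nhds)
    have e1 := Finset.sum_erase_add univ (fun k => m k * ζ k) (mem_univ i)
    have e2 := Finset.sum_erase_add (univ.erase i) (fun k => m k * ζ k) hjmem
    have e0 : ∑ k ∈ (univ.erase i).erase j, m k * ζ k = 0 :=
      Finset.sum_eq_zero fun k hk => by
        rw [hz0 k (mem_erase.1 (mem_erase.1 hk).2).1 (mem_erase.1 hk).1, mul_zero]
    linear_combination e1 + e2 - e0 + hsum
  have hζij : ζ i ≠ ζ j := by
    intro he
    have hIJ : m i + m j ≠ 0 := by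
      have h := hm {i, j} ⟨i, by simp⟩
      rwa [Finset.sum_pair hij] at h
    apply hζj
    have hmul : (m i + m j) * ζ j = 0 := by linear_combination hmom - m i * he
    exact (mul_eq_zero.1 hmul).resolve_left hIJ
  have hdiff : ∀ x l : Fin n,
      Tendsto (fun N => ((S.eps N : ℂ)) ^ 2 * (S.z N x - S.z N l)) atTop
        (nhds (ζ x - ζ l)) := by
    intro x l
    have h := (hζ x).sub (hζ l)
    simpa [mul_sub] using h
  have hkey : ∀ x l : Fin n, (x = i ∨ x = j) → l ≠ x → ζ x - ζ l ≠ 0 := by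
    intro x l hx hlx
    have hζx : ζ x ≠ 0 := by rcases hx with rfl | rfl; exacts [hζi, hζj]
    by_cases hli : l = i
    · subst hli
      rcases hx with rfl | rfl
      · exact absurd rfl hlx
      · exact sub_ne_zero.2 (Ne.symm hζij)
    by_cases hlj : l = j
    · subst hlj
      rcases hx with rfl | rfl
      · exact sub_ne_zero.2 hζij
      · exact absurd rfl hlx
    · rw [hz0 l hli hlj, sub_zero]
      exact hζx
  have hwsmall : ∀ x : Fin n, (x = i ∨ x = j) →
      ∃ C : ℝ, 0 < C ∧ ∀ᶠ N in atTop, ‖S.w N x‖ ≤ C * S.eps N ^ 2 := by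
    intro x hx
    have h1 : ∀ l : Fin n, ∃ C : ℝ, 0 < C ∧
        (l ≠ x → ∀ᶠ N in atTop,
          ‖Zq (S.delta N) (S.w N) x l‖ ≤ C * S.eps N ^ 2) := by
      intro l
      by_cases hlx : l = x
      · exact ⟨1, one_pos, fun h => absurd hlx h⟩
      · obtain ⟨C, hC, hev⟩ := small_w S x l (ζ x - ζ l) (hkey x l hx hlx) (hdiff x l)
        exact ⟨C, hC, fun _ => hev⟩
    choose C hCpos hCev using h1
    have hsnn : 0 ≤ ∑ l ∈ univ.erase x, ‖m l‖ * C l :=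
      Finset.sum_nonneg fun l _ => mul_nonneg (norm_nonneg _) (hCpos l).le
    refine ⟨(∑ l ∈ univ.erase x, ‖m l‖ * C l) + 1, by linarith, ?_⟩
    have hall : ∀ᶠ N in atTop, ∀ l ∈ univ.erase x,
        ‖Zq (S.delta N) (S.w N) x l‖ ≤ C l * S.eps N ^ 2 :=
      (eventually_all_finset _).2 fun l hl => hCev l (mem_erase.1 hl).1
    filter_upwards [hall] with N hN
    have he2 : (0 : ℝ) < S.eps N ^ 2 := pow_pos (S.eps_pos N) 2
    have hsumnn : 0 ≤ ∑ l ∈ univ.erase x, ‖m l‖ * C l :=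
      Finset.sum_nonneg fun l _ => mul_nonneg (norm_nonneg _) (hCpos l).le
    calc ‖S.w N x‖
        = ‖∑ l ∈ univ.erase x, m l * Zq (S.delta N) (S.w N) x l‖ := by
          rw [← S.eq_w N x]
      _ ≤ ∑ l ∈ univ.erase x, ‖m l * Zq (S.delta N) (S.w N) x l‖ :=
          norm_sum_le _ _
      _ ≤ ∑ l ∈ univ.erase x, ‖m l‖ * (C l * S.eps N ^ 2) := by
          refine Finset.sum_le_sum fun l hl => ?_
          rw [norm_mul]
          exact mul_le_mul_of_nonneg_left (hN l hl) (norm_nonneg _)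
      _ = (∑ l ∈ univ.erase x, ‖m l‖ * C l) * S.eps N ^ 2 := by
          rw [Finset.sum_mul]
          exact Finset.sum_congr rfl fun l _ => by ring
      _ ≤ ((∑ l ∈ univ.erase x, ‖m l‖ * C l) + 1) * S.eps N ^ 2 := by
          exact mul_le_mul_of_nonneg_right (by linarith) he2.le
  obtain ⟨Ci, hCi, hwi⟩ := hwsmall i (Or.inl rfl)
  obtain ⟨Cj, hCj, hwj⟩ := hwsmall j (Or.inr rfl)
  have hvij : ∀ᶠ N in atTop,
      ‖S.w N i - S.w N j‖ ≤ (Ci + Cj) * S.eps N ^ 2 := by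
    filter_upwards [hwi, hwj] with N h1 h2
    have h3 := abs_sub_le' (S.w N i) (S.w N j)
    have h4 : (Ci + Cj) * S.eps N ^ 2 = Ci * S.eps N ^ 2 + Cj * S.eps N ^ 2 := by ring
    linarith
  have key : ∀ x y k : Fin n, (x = i ∨ x = j) → (y = i ∨ y = j) →
      k ≠ i → k ≠ j → A x k = 1 → A y k = 1 := by
    intro x y k hx hy hki hkj hxk
    have hkx : k ≠ x := by rcases hx with rfl | rfl; exacts [hki, hkj]
    have hky : k ≠ y := by rcases hy with rfl | rfl; exacts [hki, hkj]
    obtain ⟨Λ, hΛt⟩ := S.conv_Z x k (Ne.symm hkx)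
    have hΛ : Λ ≠ 0 := by
      rintro rfl
      exact ((hAB.off_A x k (Ne.symm hkx)).1 hxk) hΛt
    obtain ⟨Cv, hCv, hv⟩ := small_v S x k (ζ x - ζ k) Λ (hkey x k hx hkx) hΛ
      (hdiff x k) hΛt
    obtain ⟨Cx, hCx, hwx⟩ := hwsmall x hx
    obtain ⟨Cy, hCy, hwy⟩ := hwsmall y hy
    have hv' : ∀ᶠ N in atTop,
        ‖S.w N y - S.w N k‖ ≤ (Cv + Cx + Cy) * S.eps N ^ 2 := by
      filter_upwards [hv, hwx, hwy] with N h1 h2 h3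
      have heq : S.w N y - S.w N k = (S.w N x - S.w N k) + (S.w N y - S.w N x) := by ring
      have h5 : ‖S.w N y - S.w N k‖ ≤
          ‖S.w N x - S.w N k‖ + ‖S.w N y - S.w N x‖ := by
        rw [heq]
        exact norm_add_le _ _
      have h6 := abs_sub_le' (S.w N y) (S.w N x)
      have h7 : (Cv + Cx + Cy) * S.eps N ^ 2 =
          Cv * S.eps N ^ 2 + Cx * S.eps N ^ 2 + Cy * S.eps N ^ 2 := by ring
      linarith
    exact (hAB.off_A y k (Ne.symm hky)).2
      (not_tendsto_zero S y k (Ne.symm hky) (Cv + Cx + Cy) (by positivity) hv')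
  constructor
  · exact (hAB.off_A i j hij).2
      (not_tendsto_zero S i j hij (Ci + Cj) (by positivity) hvij)
  · intro k hki hkj
    rcases hAB.zeroOne_A i k with h1 | h1 <;> rcases hAB.zeroOne_A j k with h2 | h2
    · rw [h1, h2]
    · have h3 := key j i k (Or.inr rfl) (Or.inl rfl) hki hkj h2
      omega
    · have h3 := key i j k (Or.inl rfl) (Or.inr rfl) hki hkj h1
      omega
    · rw [h1, h2]

end Main

theorem first_rule_of_trace_two_matrices (n : ℕ) (hn : 2 ≤ n) (m : Fin n → ℂ)
    (hm : ∀ I : Finset (Fin n), I.Nonempty → ∑ k ∈ I, m k ≠ 0)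
    (S : SingularSeq n m) (A B : Matrix (Fin n) (Fin n) ℕ)
    (hAB : IsZWMatrices S A B) :
    (Matrix.trace A = 2 →
      ∀ i j : Fin n, i ≠ j → A i i = 1 → A j j = 1 →
        A i j = 1 ∧ ∀ k : Fin n, k ≠ i → k ≠ j → A i k = A j k) ∧
    (Matrix.trace B = 2 →
      ∀ i j : Fin n, i ≠ j → B i i = 1 → B j j = 1 →
        B i j = 1 ∧ ∀ k : Fin n, k ≠ i → k ≠ j → B i k = B j k) :=
  ⟨fun htr i j hij hi hj => ruleA hm S A B hAB htr i j hij hi hj,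
   fun htr i j hij hi hj => ruleA hm S.symm B A hAB.symm' htr i j hij hi hj⟩
end
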